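/- There exists a universal constant c > 0 such that for all integers k ≥ 2 and n ≥ 1, R*(k,n) ≥ c·(log k)²/n. -/

import Mathlib

open scoped BigOperators
open Real

noncomputable section

/-- The set of probability vectors on `Fin k`. -/
def probVec (k : ℕ) : Set (Fin k → ℝ) := {P | (∀ i, 0 ≤ P i) ∧ (∑ i, P i) = 1}

/-- Shannon entropy `H(P) = ∑ pᵢ log (1/pᵢ)` (natural log, `0·log(1/0) = 0`). -/
def entropy {k : ℕ} (P : Fin k → ℝ) : ℝ := ∑ i, P i * Real.log (1 / P i)

/-- The multinomial probability mass function of the histogram `N` of `n` i.i.d. samples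
from `P`. -/
def multinomialPMF {k : ℕ} (n : ℕ) (P : Fin k → ℝ) (N : Fin k → ℕ) : ℝ :=
  if (∑ i, N i) = n then
    (n.factorial : ℝ) / (∏ i, ((N i).factorial : ℝ)) * ∏ i, P i ^ (N i)
  else 0

/-- Mean squared error of the estimator `est` of the entropy, from the histogram of
`n` i.i.d. samples of `P`. -/
def mseIID {k : ℕ} (n : ℕ) (P : Fin k → ℝ) (est : (Fin k → ℕ) → ℝ) : ℝ :=
  ∑' N : Fin k → ℕ, multinomialPMF n P N * (est N - entropy P) ^ 2

/-- The minimax quadratic risk `R*(k,n)` of entropy estimation. -/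
def Rstar (k n : ℕ) : ℝ :=
  ⨅ est : (Fin k → ℕ) → ℝ, ⨆ P : probVec k, mseIID n P.1 est

/-- two-point family: mass `1-t` at `0`, rest uniform. -/
def tp (m : ℕ) (t : ℝ) : Fin (m+1) → ℝ := fun i => if i = 0 then 1 - t else t / m

lemma sum_ite_fin (m : ℕ) (x y : ℝ) :
    ∑ i : Fin (m+1), (if i = 0 then x else y) = x + m * y := by
  rw [Fin.sum_univ_succ]
  simp [Fin.succ_ne_zero, mul_comm]

lemma tp_sum {m : ℕ} (hm : 1 ≤ m) (t : ℝ) : ∑ i, tp m t i = 1 := by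
  unfold tp
  rw [sum_ite_fin]
  have : (m : ℝ) ≠ 0 := by positivity
  field_simp
  ring

lemma tp_nonneg {m : ℕ} {t : ℝ} (h0 : 0 ≤ t) (h1 : t ≤ 1) (i : Fin (m+1)) : 0 ≤ tp m t i := by
  unfold tp; split_ifs
  · linarith
  · positivity

lemma tp_mem {m : ℕ} (hm : 1 ≤ m) {t : ℝ} (h0 : 0 ≤ t) (h1 : t ≤ 1) :
    tp m t ∈ probVec (m+1) := ⟨tp_nonneg h0 h1, tp_sum hm t⟩

lemma tp_entropy {m : ℕ} (hm : 1 ≤ m) {t : ℝ} (h0 : 0 < t) (h1 : t < 1) :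
    entropy (tp m t) = -((1-t) * Real.log (1-t)) - t * Real.log t + t * Real.log m := by
  have hm0 : (0:ℝ) < m := by positivity
  unfold entropy tp
  have : ∀ i : Fin (m+1), (if i = 0 then (1-t) else t/m) * Real.log (1 / (if i = 0 then (1-t) else t/m))
      = if i = 0 then (1-t) * Real.log (1/(1-t)) else (t/m) * Real.log (m/t) := by
    intro i; split_ifs with h
    · rfl
    · rw [one_div, inv_div]
  rw [Finset.sum_congr rfl (fun i _ => this i), sum_ite_fin]
  rw [Real.log_div (ne_of_gt hm0) (ne_of_gt h0), one_div, Real.log_inv]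
  field_simp
  ring

lemma entropy_gap {m : ℕ} (hm : 1 ≤ m) {a b : ℝ} (ha : a = 1/4) (hab : a < b)
    (hb1 : b ≤ 5/16) :
    (b - a) * Real.log (m+1) ≤ entropy (tp m b) - entropy (tp m a) := by
  have hm0 : (0:ℝ) < m := by positivity
  have hm1 : (1:ℝ) ≤ m := by exact_mod_cast hm
  have hb0 : 0 < b := by linarith
  have h1b : 0 < 1 - b := by linarith
  have ha0 : (0:ℝ) < a := by linarith
  have h1a : (0:ℝ) < 1 - a := by linarith
  rw [tp_entropy hm hb0 (by linarith), tp_entropy hm ha0 (by linarith)]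
  -- KL nonnegativity pieces
  have kl1 : a - b ≤ a * (Real.log a - Real.log b) := by
    have := Real.log_le_sub_one_of_pos (show 0 < b/a by positivity)
    rw [Real.log_div (ne_of_gt hb0) (ne_of_gt ha0)] at this
    have hc : a * (b/a) = b := by field_simp
    nlinarith [mul_le_mul_of_nonneg_left this (le_of_lt ha0)]
  have kl2 : b - a ≤ (1-a) * (Real.log (1-a) - Real.log (1-b)) := by
    have := Real.log_le_sub_one_of_pos (show 0 < (1-b)/(1-a) by positivity)
    rw [Real.log_div (ne_of_gt h1b) (ne_of_gt h1a)] at this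
    have hc : (1-a) * ((1-b)/(1-a)) = 1-b := by field_simp
    nlinarith [mul_le_mul_of_nonneg_left this (le_of_lt h1a)]
  -- log (m+1) ≤ log m + log (1-b) - log b
  have hlog : Real.log (m+1) ≤ Real.log m + Real.log (1-b) - Real.log b := by
    have h2 : Real.log m + Real.log (1-b) - Real.log b = Real.log ((m * (1-b))/b) := by
      rw [Real.log_div (by positivity) (ne_of_gt hb0), Real.log_mul (ne_of_gt hm0) (ne_of_gt h1b)]
    rw [h2]
    apply Real.log_le_log (by positivity)
    rw [le_div_iff₀ hb0]
    nlinarith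
  nlinarith [mul_le_mul_of_nonneg_left hlog (by linarith : (0:ℝ) ≤ b - a)]

lemma tp_affinity {m : ℕ} (hm : 1 ≤ m) {a b : ℝ} (ha : 0 ≤ a) (hb : 0 ≤ b) :
    ∑ i, Real.sqrt (tp m a i * tp m b i)
      = Real.sqrt ((1-a)*(1-b)) + Real.sqrt (a*b) := by
  have hm0 : (0:ℝ) < m := by positivity
  unfold tp
  have : ∀ i : Fin (m+1), Real.sqrt ((if i = 0 then 1-a else a/m) * (if i = 0 then 1-b else b/m))
      = if i = 0 then Real.sqrt ((1-a)*(1-b)) else Real.sqrt (a*b) / m := by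
    intro i; split_ifs with h
    · rfl
    · rw [show a/m * (b/m) = (a*b)/(m^2) by ring, Real.sqrt_div (by positivity),
        Real.sqrt_sq (le_of_lt hm0)]
  rw [Finset.sum_congr rfl (fun i _ => this i), sum_ite_fin]
  field_simp

lemma affinity_lb {e : ℝ} (he : 0 < e) (he' : e ≤ 1/16) :
    1 - e^2 ≤ Real.sqrt ((1-(1/4:ℝ))*(1-(1/4+e))) + Real.sqrt ((1/4:ℝ)*(1/4+e)) := by
  have h1 : Real.sqrt ((1/4:ℝ)*(1/4+e)) = Real.sqrt (1/4) * Real.sqrt (1/4+e) :=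
    Real.sqrt_mul (by norm_num) _
  have h2 : Real.sqrt ((1-(1/4:ℝ))*(1-(1/4+e))) = Real.sqrt (3/4) * Real.sqrt (3/4-e) := by
    rw [← Real.sqrt_mul (by norm_num)]; congr 1; ring
  have s1 : Real.sqrt (1/4:ℝ) = 1/2 := by
    rw [show (1/4:ℝ) = (1/2)^2 by norm_num, Real.sqrt_sq (by norm_num)]
  rw [h1, h2, s1]
  have hx : 1/2 + e - e^2 ≤ Real.sqrt (1/4+e) := by
    rw [Real.le_sqrt (by nlinarith) (by linarith)]
    nlinarith [pow_pos he 3]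
  have huv : 3/4 - e/2 - e^2/2 ≤ Real.sqrt (3/4) * Real.sqrt (3/4-e) := by
    rw [← Real.sqrt_mul (by norm_num)]
    rw [show Real.sqrt ((3/4:ℝ)*(3/4-e)) = Real.sqrt (9/16 - (3/4)*e) by congr 1; ring]
    rw [Real.le_sqrt (by nlinarith) (by nlinarith)]
    nlinarith [mul_pos he he, mul_pos (mul_pos he he) he, sq_nonneg e]
  nlinarith [Real.sqrt_nonneg (1/4+e : ℝ)]

lemma pmf_term {k n : ℕ} (P : Fin k → ℝ) {N : Fin k → ℕ} (h : ∑ i, N i = n) :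
    multinomialPMF n P N = (Nat.multinomial Finset.univ N : ℝ) * ∏ i, P i ^ N i := by
  have hspec := Nat.multinomial_spec Finset.univ N
  rw [multinomialPMF, if_pos h]
  congr 1
  have hfac : (0:ℝ) < ∏ i, ((N i).factorial : ℝ) := by positivity
  rw [eq_comm, eq_div_iff (ne_of_gt hfac)]
  push_cast [← hspec, ← h]
  ring

lemma pmf_zero {k n : ℕ} (P : Fin k → ℝ) {N : Fin k → ℕ}
    (h : N ∉ Finset.piAntidiag Finset.univ n) : multinomialPMF n P N = 0 := by
  rw [multinomialPMF, if_neg]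
  intro hs
  exact h (by simp [Finset.mem_piAntidiag, hs])

lemma pmf_nonneg {k n : ℕ} {P : Fin k → ℝ} (hP : ∀ i, 0 ≤ P i) (N : Fin k → ℕ) :
    0 ≤ multinomialPMF n P N := by
  rw [multinomialPMF]
  split_ifs
  · have h1 : (0:ℝ) ≤ (n.factorial : ℝ) / ∏ i, ((N i).factorial : ℝ) := by positivity
    exact mul_nonneg h1 (Finset.prod_nonneg fun i _ => pow_nonneg (hP i) _)
  · exact le_refl 0

lemma pmf_sum {k n : ℕ} (P : Fin k → ℝ) :
    ∑ N ∈ Finset.piAntidiag Finset.univ n, multinomialPMF n P N = (∑ i, P i)^n := by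
  rw [Finset.sum_pow_eq_sum_piAntidiag]
  apply Finset.sum_congr rfl
  intro N hN
  rw [Finset.mem_piAntidiag] at hN
  rw [pmf_term P hN.1]

lemma pmf_sqrt {k n : ℕ} {P Q : Fin k → ℝ} (hP : ∀ i, 0 ≤ P i) (hQ : ∀ i, 0 ≤ Q i)
    {N : Fin k → ℕ} (h : ∑ i, N i = n) :
    Real.sqrt (multinomialPMF n P N * multinomialPMF n Q N)
      = (Nat.multinomial Finset.univ N : ℝ) * ∏ i, Real.sqrt (P i * Q i) ^ N i := by
  have key : multinomialPMF n P N * multinomialPMF n Q N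
      = ((Nat.multinomial Finset.univ N : ℝ) * ∏ i, Real.sqrt (P i * Q i) ^ N i)^2 := by
    rw [pmf_term P h, pmf_term Q h, mul_pow, ← Finset.prod_pow]
    have : ∀ i : Fin k, (Real.sqrt (P i * Q i) ^ N i)^2 = P i ^ N i * Q i ^ N i := by
      intro i
      rw [← pow_mul, mul_comm (N i) 2, pow_mul, Real.sq_sqrt (mul_nonneg (hP i) (hQ i)), mul_pow]
    rw [Finset.prod_congr rfl fun i _ => this i, Finset.prod_mul_distrib]
    ring
  rw [key, Real.sqrt_sq (by positivity)]

lemma pmf_affinity {k n : ℕ} {P Q : Fin k → ℝ} (hP : ∀ i, 0 ≤ P i) (hQ : ∀ i, 0 ≤ Q i) :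
    ∑ N ∈ Finset.piAntidiag Finset.univ n,
      Real.sqrt (multinomialPMF n P N * multinomialPMF n Q N)
      = (∑ i, Real.sqrt (P i * Q i))^n := by
  rw [Finset.sum_pow_eq_sum_piAntidiag]
  apply Finset.sum_congr rfl
  intro N hN
  rw [Finset.mem_piAntidiag] at hN
  rw [pmf_sqrt hP hQ hN.1]

lemma mse_eq_sum {k n : ℕ} (P : Fin k → ℝ) (est : (Fin k → ℕ) → ℝ) :
    mseIID n P est = ∑ N ∈ Finset.piAntidiag Finset.univ n,
      multinomialPMF n P N * (est N - entropy P) ^ 2 := by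
  apply tsum_eq_sum
  intro N hN
  rw [pmf_zero P hN, zero_mul]

lemma entropy_nonneg {k : ℕ} {P : Fin k → ℝ} (hP : P ∈ probVec k) : 0 ≤ entropy P := by
  apply Finset.sum_nonneg
  intro i _
  rcases eq_or_lt_of_le (hP.1 i) with h | h
  · rw [← h]; simp
  · have h1 : P i ≤ 1 := by
      rw [← hP.2]
      exact Finset.single_le_sum (fun j _ => hP.1 j) (Finset.mem_univ i)
    have : (1:ℝ) ≤ 1 / P i := by rw [le_div_iff₀ h]; linarith
    exact mul_nonneg (le_of_lt h) (Real.log_nonneg this)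

lemma entropy_le_card {k : ℕ} {P : Fin k → ℝ} (hP : P ∈ probVec k) : entropy P ≤ k := by
  have : ∀ i : Fin k, P i * Real.log (1 / P i) ≤ 1 := by
    intro i
    rcases eq_or_lt_of_le (hP.1 i) with h | h
    · rw [← h]; simp
    · have := Real.log_le_sub_one_of_pos (show 0 < 1 / P i by positivity)
      have hc : P i * (1 / P i) = 1 := by field_simp
      nlinarith
  calc entropy P ≤ ∑ _i : Fin k, (1:ℝ) := Finset.sum_le_sum fun i _ => this i
    _ = k := by simp

lemma mse_bdd {k n : ℕ} (est : (Fin k → ℕ) → ℝ) :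
    BddAbove (Set.range fun P : probVec k => mseIID n P.1 est) := by
  refine ⟨∑ N ∈ Finset.piAntidiag Finset.univ n, (|est N| + k)^2, ?_⟩
  rintro x ⟨⟨P, hP⟩, rfl⟩
  show mseIID n P est ≤ _
  rw [mse_eq_sum]
  apply Finset.sum_le_sum
  intro N hN
  have hp1 : multinomialPMF n P N ≤ 1 := by
    have htot : ∑ M ∈ Finset.piAntidiag Finset.univ n, multinomialPMF n P M = 1 := by
      rw [pmf_sum, hP.2, one_pow]
    rw [← htot]
    exact Finset.single_le_sum (fun M _ => pmf_nonneg hP.1 M) hN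
  have habs : |est N - entropy P| ≤ |est N| + k := by
    calc |est N - entropy P| ≤ |est N| + |entropy P| := abs_sub _ _
      _ ≤ |est N| + k := by
          rw [abs_of_nonneg (entropy_nonneg hP)]
          linarith [entropy_le_card hP]
  have hsq : (est N - entropy P)^2 ≤ (|est N| + k)^2 := by
    rw [← sq_abs]
    apply pow_le_pow_left₀ (abs_nonneg _) habs
  calc multinomialPMF n P N * (est N - entropy P)^2
      ≤ 1 * (|est N| + k)^2 := by
        apply mul_le_mul hp1 hsq (sq_nonneg _) (by norm_num)
    _ = (|est N| + k)^2 := one_mul _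

lemma lecam {k n : ℕ} {P Q : Fin k → ℝ} (hP : P ∈ probVec k) (hQ : Q ∈ probVec k)
    (est : (Fin k → ℕ) → ℝ) :
    ((∑ i, Real.sqrt (P i * Q i))^n)^2 * (entropy Q - entropy P)^2 / 8
      ≤ max (mseIID n P est) (mseIID n Q est) := by
  set S := Finset.piAntidiag (Finset.univ : Finset (Fin k)) n with hS
  set f : (Fin k → ℕ) → ℝ := multinomialPMF n P with hf
  set g : (Fin k → ℕ) → ℝ := multinomialPMF n Q with hg
  set u := entropy P
  set v := entropy Q
  have hfpos : ∀ N, 0 ≤ f N := fun N => pmf_nonneg hP.1 N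
  have hgpos : ∀ N, 0 ≤ g N := fun N => pmf_nonneg hQ.1 N
  -- step 1 : sum of mses ≥ (∑ min) * (v-u)^2/2
  have step1 : (∑ N ∈ S, min (f N) (g N)) * (v - u)^2 / 2
      ≤ mseIID n P est + mseIID n Q est := by
    rw [mse_eq_sum, mse_eq_sum, ← Finset.sum_add_distrib, Finset.sum_mul, Finset.sum_div]
    apply Finset.sum_le_sum
    intro N _
    have h1 := min_le_left (f N) (g N)
    have h2 := min_le_right (f N) (g N)
    have h0 : 0 ≤ min (f N) (g N) := le_min (hfpos N) (hgpos N)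
    nlinarith [sq_nonneg (2 * est N - u - v), sq_nonneg (est N - u), sq_nonneg (est N - v),
      mul_nonneg h0 (sq_nonneg (2 * est N - u - v)),
      mul_le_mul_of_nonneg_right h1 (sq_nonneg (est N - u)),
      mul_le_mul_of_nonneg_right h2 (sq_nonneg (est N - v))]
  -- step 2 : (∑ √(fg))^2 ≤ 2 * ∑ min
  have step2 : ((∑ i, Real.sqrt (P i * Q i))^n)^2 ≤ 2 * ∑ N ∈ S, min (f N) (g N) := by
    have haff : ∑ N ∈ S, Real.sqrt (f N * g N) = (∑ i, Real.sqrt (P i * Q i))^n :=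
      pmf_affinity hP.1 hQ.1
    have hmm : ∀ N, Real.sqrt (f N * g N)
        = Real.sqrt (min (f N) (g N)) * Real.sqrt (max (f N) (g N)) := by
      intro N
      rw [← Real.sqrt_mul (le_min (hfpos N) (hgpos N)), min_mul_max]
    have hcs : ∑ N ∈ S, Real.sqrt (f N * g N)
        ≤ Real.sqrt (∑ N ∈ S, min (f N) (g N)) * Real.sqrt (∑ N ∈ S, max (f N) (g N)) := by
      rw [Finset.sum_congr rfl fun N _ => hmm N]
      exact Real.sum_sqrt_mul_sqrt_le S (fun N => le_min (hfpos N) (hgpos N))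
        (fun N => le_max_of_le_left (hfpos N))
    have hmax : ∑ N ∈ S, max (f N) (g N) ≤ 2 := by
      calc ∑ N ∈ S, max (f N) (g N) ≤ ∑ N ∈ S, (f N + g N) := by
            apply Finset.sum_le_sum
            intro N _
            exact max_le (le_add_of_nonneg_right (hgpos N)) (le_add_of_nonneg_left (hfpos N))
        _ = 2 := by
            rw [Finset.sum_add_distrib, hf, hg, pmf_sum, pmf_sum, hP.2, hQ.2]
            norm_num
    have hminnn : 0 ≤ ∑ N ∈ S, min (f N) (g N) :=
      Finset.sum_nonneg fun N _ => le_min (hfpos N) (hgpos N)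
    calc ((∑ i, Real.sqrt (P i * Q i))^n)^2
        ≤ (Real.sqrt (∑ N ∈ S, min (f N) (g N)) * Real.sqrt (∑ N ∈ S, max (f N) (g N)))^2 := by
          apply pow_le_pow_left₀ (by rw [← haff]; positivity) (by rw [← haff]; exact hcs)
      _ = (∑ N ∈ S, min (f N) (g N)) * (∑ N ∈ S, max (f N) (g N)) := by
          rw [mul_pow, Real.sq_sqrt hminnn,
            Real.sq_sqrt (Finset.sum_nonneg fun N _ => le_max_of_le_left (hfpos N))]
      _ ≤ (∑ N ∈ S, min (f N) (g N)) * 2 := by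
          exact mul_le_mul_of_nonneg_left hmax hminnn
      _ = 2 * ∑ N ∈ S, min (f N) (g N) := mul_comm _ _
  -- combine
  have h1 : mseIID n P est ≤ max (mseIID n P est) (mseIID n Q est) := le_max_left _ _
  have h2 : mseIID n Q est ≤ max (mseIID n P est) (mseIID n Q est) := le_max_right _ _
  nlinarith [mul_le_mul_of_nonneg_right step2 (show (0:ℝ) ≤ (v-u)^2/4 by positivity)]


/-- minimax lower bound `R*(k,n) ≳ (log k)²/n`. -/
theorem minimax_lower_parametric :
    ∃ c : ℝ, 0 < c ∧ ∀ k n : ℕ, 2 ≤ k → 1 ≤ n →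
      c * (Real.log k) ^ 2 / n ≤ Rstar k n := by
  refine ⟨1/4096, by norm_num, ?_⟩
  intro k n hk hn
  obtain ⟨m, rfl⟩ : ∃ m, k = m + 1 := ⟨k-1, by omega⟩
  have hm : 1 ≤ m := by omega
  have hn0 : (0:ℝ) < n := by exact_mod_cast hn
  have hsn : 1 ≤ Real.sqrt n := by
    rw [show (1:ℝ) = Real.sqrt 1 by simp]
    exact Real.sqrt_le_sqrt (by exact_mod_cast hn)
  have hsn0 : 0 < Real.sqrt n := by linarith
  have hsnsq : Real.sqrt n ^ 2 = n := Real.sq_sqrt (le_of_lt hn0)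
  set e := min (1/16 : ℝ) (1/(4*Real.sqrt n)) with hedef
  have he : 0 < e := lt_min (by norm_num) (by positivity)
  have he16 : e ≤ 1/16 := min_le_left _ _
  have hesqn : (n:ℝ) * e^2 ≤ 1/16 := by
    have h1 : e ≤ 1/(4*Real.sqrt n) := min_le_right _ _
    have h2 : e^2 ≤ (1/(4*Real.sqrt n))^2 := pow_le_pow_left₀ he.le h1 2
    have h3 : (1/(4*Real.sqrt n))^2 = 1/(16*n) := by
      rw [div_pow, mul_pow, hsnsq]; norm_num
    rw [h3] at h2
    calc (n:ℝ) * e^2 ≤ (n:ℝ) * (1/(16*n)) := by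
          exact mul_le_mul_of_nonneg_left h2 (le_of_lt hn0)
      _ = 1/16 := by field_simp
  have he2low : 1/(256*(n:ℝ)) ≤ e^2 := by
    have helow : 1/(16*Real.sqrt n) ≤ e := by
      apply le_min
      · rw [div_le_div_iff₀ (by positivity) (by norm_num)]
        nlinarith
      · rw [div_le_div_iff₀ (by positivity) (by positivity)]
        nlinarith
    calc 1/(256*(n:ℝ)) = (1/(16*Real.sqrt n))^2 := by
          rw [div_pow, mul_pow, hsnsq]; norm_num
      _ ≤ e^2 := pow_le_pow_left₀ (by positivity) helow 2
  -- the two distributions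
  have hPmem : tp m (1/4) ∈ probVec (m+1) := tp_mem hm (by norm_num) (by norm_num)
  have hQmem : tp m (1/4+e) ∈ probVec (m+1) := tp_mem hm (by linarith) (by linarith)
  set L := Real.log ((m:ℝ)+1) with hL
  have hL0 : 0 ≤ L := Real.log_nonneg (le_add_of_nonneg_left (Nat.cast_nonneg m))
  -- entropy gap
  have gap : e * L ≤ entropy (tp m (1/4+e)) - entropy (tp m (1/4)) := by
    have := entropy_gap hm (rfl : (1/4:ℝ) = 1/4) (by linarith : (1/4:ℝ) < 1/4+e)
      (by linarith : (1/4:ℝ)+e ≤ 5/16)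
    simpa using this
  set G := entropy (tp m (1/4+e)) - entropy (tp m (1/4)) with hG
  have hG0 : 0 ≤ G := le_trans (by positivity) gap
  have hG2 : e^2 * L^2 ≤ G^2 := by
    calc e^2 * L^2 = (e*L)^2 := by ring
      _ ≤ G^2 := pow_le_pow_left₀ (by positivity) gap 2
  -- affinity
  set r := ∑ i, Real.sqrt (tp m (1/4) i * tp m (1/4+e) i) with hr
  have raff : 1 - e^2 ≤ r := by
    rw [hr, tp_affinity hm (by norm_num) (by linarith)]
    exact affinity_lb he he16
  have hbase0 : (0:ℝ) ≤ 1 - e^2 := by nlinarith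
  have rho2 : 7/8 ≤ (r^n)^2 := by
    have h1 : (1 - e^2)^(2*n) ≤ (r^n)^2 := by
      rw [pow_mul']
      exact pow_le_pow_left₀ (pow_nonneg hbase0 n) (pow_le_pow_left₀ hbase0 raff n) 2
    have h2 : 1 + (2*n : ℕ) * (-(e^2)) ≤ (1 + (-(e^2)))^(2*n) :=
      one_add_mul_le_pow (by nlinarith) (2*n)
    have h3 : (1:ℝ) + (2*n : ℕ) * (-(e^2)) = 1 - 2*((n:ℝ)*e^2) := by push_cast; ring
    rw [h3] at h2
    have h4 : (1:ℝ) - 2*((n:ℝ)*e^2) ≥ 7/8 := by linarith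
    calc (7/8 : ℝ) ≤ 1 - 2*((n:ℝ)*e^2) := h4
      _ ≤ (1 + (-(e^2)))^(2*n) := h2
      _ = (1 - e^2)^(2*n) := by ring_nf
      _ ≤ (r^n)^2 := h1
  clear_value e L G r
  -- per-estimator bound
  have key : ∀ est : (Fin (m+1) → ℕ) → ℝ,
      1/4096 * L^2 / n ≤ ⨆ P : probVec (m+1), mseIID n P.1 est := by
    intro est
    have hlc := lecam (n := n) hPmem hQmem est
    rw [← hr, ← hG] at hlc
    have hmax : (r^n)^2 * G^2 / 8
        ≤ max (mseIID n (tp m (1/4)) est) (mseIID n (tp m (1/4+e)) est) := hlc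
    have hsup : max (mseIID n (tp m (1/4)) est) (mseIID n (tp m (1/4+e)) est)
        ≤ ⨆ P : probVec (m+1), mseIID n P.1 est := by
      apply max_le
      · exact le_ciSup (mse_bdd est) (⟨tp m (1/4), hPmem⟩ : probVec (m+1))
      · exact le_ciSup (mse_bdd est) (⟨tp m (1/4+e), hQmem⟩ : probVec (m+1))
    have hGL : L^2/(256*(n:ℝ)) ≤ G^2 := by
      calc L^2/(256*(n:ℝ)) = (1/(256*(n:ℝ))) * L^2 := by ring
        _ ≤ e^2 * L^2 := mul_le_mul_of_nonneg_right he2low (by positivity)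
        _ ≤ G^2 := hG2
    have hfin : 1/4096 * L^2 / n ≤ (r^n)^2 * G^2 / 8 := by
      have hmul : (7/8) * (L^2/(256*(n:ℝ))) ≤ (r^n)^2 * G^2 :=
        mul_le_mul rho2 hGL (by positivity) (by positivity)
      have ht : 0 ≤ L^2/(n:ℝ) := by positivity
      have heq : (7/8) * (L^2/(256*(n:ℝ)))/8 = 7/16384 * (L^2/(n:ℝ)) := by
        ring
      have heq2 : 1/4096 * L^2 / (n:ℝ) = 4/16384 * (L^2/(n:ℝ)) := by
        ring
      rw [heq2]
      calc 4/16384 * (L^2/(n:ℝ)) ≤ 7/16384 * (L^2/(n:ℝ)) := by linarith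
        _ = (7/8) * (L^2/(256*(n:ℝ)))/8 := heq.symm
        _ ≤ (r^n)^2 * G^2 / 8 := by linarith
    exact le_trans hfin (le_trans hmax hsup)
  push_cast
  rw [← hL]
  exact le_ciInf key
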